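/- Let A be an n×m binary matrix and X_1, X_2, …, X_s transpositions of rows such that r(X_1X_2⋯X_sA) < r(X_2⋯X_sA) < ⋯ < r(X_sA) < r(A) in lexicographic order. Then c(X_1X_2⋯X_sA) < c(A) in lexicographic order. -/

import Mathlib

/-- The value of a row of length `m` read as a binary number (most significant digit first). -/
def rowVal (m : ℕ) (row : Fin m → Bool) : ℕ :=
  ∑ j : Fin m, (row j).toNat * 2 ^ (m - 1 - (j : ℕ))

/-- `r(A)`: the tuple of row values of a binary matrix. -/
def rtup {n m : ℕ} (A : Fin n → Fin m → Bool) : Fin n → ℕ :=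
  fun i => rowVal m (A i)

/-- `c(A)`: the tuple of column values of a binary matrix. -/
def ctup {n m : ℕ} (A : Fin n → Fin m → Bool) : Fin m → ℕ :=
  fun j => rowVal n (fun i => A i j)

/-- `A ∼ B`: `B` is obtained from `A` by permuting rows and columns. -/
def MatEquiv {n m : ℕ} (A B : Fin n → Fin m → Bool) : Prop :=
  ∃ (ρ : Equiv.Perm (Fin n)) (σ : Equiv.Perm (Fin m)), ∀ i j, B i j = A (ρ i) (σ j)

/-- `A` is semi-canonical: both `r(A)` and `c(A)` are weakly increasing. -/
def SemiCanonical {n m : ℕ} (A : Fin n → Fin m → Bool) : Prop :=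
  Monotone (rtup A) ∧ Monotone (ctup A)

/-- `A` is canonical: `r(A)` is the lexicographic minimum over the equivalence class of `A`. -/
def Canonical {n m : ℕ} (A : Fin n → Fin m → Bool) : Prop :=
  ∀ B, MatEquiv A B → toLex (rtup A) ≤ toLex (rtup B)

lemma sum_range_two_pow (t : ℕ) : ∑ k ∈ Finset.range t, 2 ^ k = 2 ^ t - 1 := by
  induction t with
  | zero => simp
  | succ t ih =>
    rw [Finset.sum_range_succ, ih]
    have : 1 ≤ 2 ^ t := Nat.one_le_two_pow
    omega

lemma rowVal_lt_of {m : ℕ} (x y : Fin m → Bool) (j : Fin m)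
    (hagree : ∀ j' : Fin m, j' < j → x j' = y j')
    (hx : x j = false) (hy : y j = true) :
    rowVal m x < rowVal m y := by
  classical
  unfold rowVal
  set w : Fin m → ℕ := fun j' => 2 ^ (m - 1 - (j' : ℕ)) with hw
  have hsplit : ∀ z : Fin m → Bool,
      (∑ j' : Fin m, (z j').toNat * w j')
        = (∑ j' ∈ Finset.univ.filter (fun j' : Fin m => j' < j), (z j').toNat * w j')
          + ∑ j' ∈ Finset.univ.filter (fun j' : Fin m => ¬ j' < j), (z j').toNat * w j' :=
    fun z => (Finset.sum_filter_add_sum_filter_not _ _ _).symm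
  rw [hsplit x, hsplit y]
  have hL : (∑ j' ∈ Finset.univ.filter (fun j' : Fin m => j' < j), (x j').toNat * w j')
      = ∑ j' ∈ Finset.univ.filter (fun j' : Fin m => j' < j), (y j').toNat * w j' := by
    apply Finset.sum_congr rfl
    intro j' hj'
    rw [hagree j' (Finset.mem_filter.mp hj').2]
  rw [hL]
  apply Nat.add_lt_add_left
  have hset : Finset.univ.filter (fun j' : Fin m => ¬ j' < j)
      = insert j (Finset.univ.filter (fun j' : Fin m => j < j')) := by
    ext j'
    simp only [Finset.mem_filter, Finset.mem_insert, Finset.mem_univ, true_and, not_lt]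
    constructor
    · intro h
      rcases eq_or_lt_of_le h with h | h
      · exact Or.inl h.symm
      · exact Or.inr h
    · rintro (rfl | h)
      · exact le_rfl
      · exact h.le
  have hjnot : j ∉ Finset.univ.filter (fun j' : Fin m => j < j') := by simp
  rw [hset, Finset.sum_insert hjnot, Finset.sum_insert hjnot, hx, hy]
  simp only [Bool.toNat_false, Bool.toNat_true, zero_mul, one_mul, zero_add]
  have htail : (∑ j' ∈ Finset.univ.filter (fun j' : Fin m => j < j'), (x j').toNat * w j')
      ≤ ∑ j' ∈ Finset.univ.filter (fun j' : Fin m => j < j'), w j' := by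
    apply Finset.sum_le_sum
    intro j' _
    have : (x j').toNat ≤ 1 := Bool.toNat_le _
    calc (x j').toNat * w j' ≤ 1 * w j' := Nat.mul_le_mul_right _ this
      _ = w j' := one_mul _
  have hreindex : (∑ j' ∈ Finset.univ.filter (fun j' : Fin m => j < j'), w j')
      = ∑ k ∈ (Finset.univ.filter (fun j' : Fin m => j < j')).image
          (fun j' : Fin m => m - 1 - (j' : ℕ)), 2 ^ k := by
    rw [Finset.sum_image]
    intro a _ b _ hab
    have ha := a.isLt
    have hb := b.isLt
    simp only at hab
    exact Fin.ext (by omega)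
  have hsub : (Finset.univ.filter (fun j' : Fin m => j < j')).image
      (fun j' : Fin m => m - 1 - (j' : ℕ)) ⊆ Finset.range (m - 1 - (j : ℕ)) := by
    intro k hk
    simp only [Finset.mem_image, Finset.mem_filter, Finset.mem_univ, true_and] at hk
    obtain ⟨j', hj', rfl⟩ := hk
    have h1 := j'.isLt
    have h2 : (j : ℕ) < (j' : ℕ) := hj'
    exact Finset.mem_range.mpr (by omega)
  have hbound : (∑ k ∈ (Finset.univ.filter (fun j' : Fin m => j < j')).image
      (fun j' : Fin m => m - 1 - (j' : ℕ)), 2 ^ k) ≤ 2 ^ (m - 1 - (j : ℕ)) - 1 := by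
    calc _ ≤ ∑ k ∈ Finset.range (m - 1 - (j : ℕ)), 2 ^ k :=
          Finset.sum_le_sum_of_subset hsub
      _ = 2 ^ (m - 1 - (j : ℕ)) - 1 := sum_range_two_pow _
  have hpos : 1 ≤ 2 ^ (m - 1 - (j : ℕ)) := Nat.one_le_two_pow
  have hx' : (∑ j' ∈ Finset.univ.filter (fun j' : Fin m => j < j'), (x j').toNat * w j')
      ≤ 2 ^ (m - 1 - (j : ℕ)) - 1 := le_trans htail (hreindex ▸ hbound)
  have : w j = 2 ^ (m - 1 - (j : ℕ)) := rfl
  omega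

/-- Single-step lemma, with the two swapped rows ordered. -/
lemma step_ordered {n m : ℕ} (C D : Fin n → Fin m → Bool) (u v : Fin n) (huv : u < v)
    (hrel : ∀ i j, C i j = D (Equiv.swap u v i) j)
    (hlt : toLex (rtup C) < toLex (rtup D)) :
    toLex (ctup C) < toLex (ctup D) := by
  classical
  have hne : u ≠ v := ne_of_lt huv
  have hCu : ∀ j, C u j = D v j := fun j => by rw [hrel, Equiv.swap_apply_left]
  have hCv : ∀ j, C v j = D u j := fun j => by rw [hrel, Equiv.swap_apply_right]
  have hCo : ∀ i, i ≠ u → i ≠ v → ∀ j, C i j = D i j := fun i h1 h2 j => by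
    rw [hrel, Equiv.swap_apply_of_ne_of_ne h1 h2]
  obtain ⟨i₀, hag, h0⟩ := hlt
  have hi0ne : rtup C i₀ ≠ rtup D i₀ := ne_of_lt h0
  have hi0 : i₀ = u := by
    by_contra hiu
    have hiv : i₀ = v := by
      by_contra hiv
      apply hi0ne
      unfold rtup
      congr 1
      funext j
      exact hCo i₀ hiu hiv j
    rw [hiv] at h0 hag
    -- then rtup C u = rtup D u, i.e. rowVal (D v) = rowVal (D u)
    have h1 : rtup C u = rtup D u := hag u huv
    have h2 : rowVal m (D v) = rowVal m (D u) := by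
      have : rtup C u = rowVal m (D v) := by
        unfold rtup; congr 1; funext j; exact hCu j
      rw [← this, h1]; rfl
    have h3 : rowVal m (D u) < rowVal m (D v) := by
      have : rtup C v = rowVal m (D u) := by
        unfold rtup; congr 1; funext j; exact hCv j
      rw [← this]; exact h0
    omega
  rw [hi0] at h0
  -- key inequality between the two rows
  have hxy : rowVal m (D v) < rowVal m (D u) := by
    have : rtup C u = rowVal m (D v) := by
      unfold rtup; congr 1; funext j; exact hCu j
    rw [← this]; exact h0
  set x : Fin m → Bool := D v with hxdef
  set y : Fin m → Bool := D u with hydef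
  have hxyne : x ≠ y := by
    intro h; rw [h] at hxy; omega
  have hTne : (Finset.univ.filter (fun j : Fin m => x j ≠ y j)).Nonempty := by
    rw [Finset.filter_nonempty_iff]
    obtain ⟨j, hj⟩ := Function.ne_iff.mp hxyne
    exact ⟨j, Finset.mem_univ _, hj⟩
  set j₀ := (Finset.univ.filter (fun j : Fin m => x j ≠ y j)).min' hTne with hj₀def
  have hj₀mem : x j₀ ≠ y j₀ := by
    have := Finset.min'_mem _ hTne
    exact (Finset.mem_filter.mp this).2
  have hagcol : ∀ j : Fin m, j < j₀ → x j = y j := by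
    intro j hj
    by_contra hne'
    have : j₀ ≤ j :=
      Finset.min'_le (Finset.univ.filter (fun j : Fin m => x j ≠ y j)) j
        (Finset.mem_filter.mpr ⟨Finset.mem_univ _, hne'⟩)
    exact absurd hj (not_lt.mpr this)
  have hbits : x j₀ = false ∧ y j₀ = true := by
    cases hxj : x j₀ <;> cases hyj : y j₀
    · rw [hxj, hyj] at hj₀mem; exact absurd rfl hj₀mem
    · exact ⟨rfl, rfl⟩
    · exfalso
      have := rowVal_lt_of y x j₀ (fun j' hj' => (hagcol j' hj').symm) hyj hxj
      omega
    · rw [hxj, hyj] at hj₀mem; exact absurd rfl hj₀mem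
  -- now build the lexicographic witness on columns
  refine ⟨j₀, ?_, ?_⟩
  · intro j hj
    show ctup C j = ctup D j
    unfold ctup
    congr 1
    funext i
    by_cases h1 : i = u
    · rw [h1, hCu j]; exact hagcol j hj
    · by_cases h2 : i = v
      · rw [h2, hCv j]; exact (hagcol j hj).symm
      · exact hCo i h1 h2 j
  · show ctup C j₀ < ctup D j₀
    unfold ctup
    apply rowVal_lt_of _ _ u
    · intro i hi
      have h1 : i ≠ u := ne_of_lt hi
      have h2 : i ≠ v := ne_of_lt (lt_trans hi huv)
      exact hCo i h1 h2 j₀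
    · rw [hCu j₀]; exact hbits.1
    · exact hbits.2

lemma step {n m : ℕ} (C D : Fin n → Fin m → Bool) (u v : Fin n) (huv : u ≠ v)
    (hrel : ∀ i j, C i j = D (Equiv.swap u v i) j)
    (hlt : toLex (rtup C) < toLex (rtup D)) :
    toLex (ctup C) < toLex (ctup D) := by
  rcases huv.lt_or_gt with h | h
  · exact step_ordered C D u v h hrel hlt
  · exact step_ordered C D v u h (fun i j => by rw [hrel, Equiv.swap_comm]) hlt

theorem chain_row_transpositions {n m s : ℕ} (hs : 0 < s)
    (A : Fin n → Fin m → Bool) (B : Fin (s + 1) → Fin n → Fin m → Bool)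
    (hlast : B (Fin.last s) = A)
    (hswap : ∀ k : Fin s, ∃ u v : Fin n, u ≠ v ∧
      ∀ i j, B k.castSucc i j = B k.succ (Equiv.swap u v i) j)
    (hchain : ∀ k : Fin s, toLex (rtup (B k.castSucc)) < toLex (rtup (B k.succ))) :
    toLex (ctup (B 0)) < toLex (ctup A) := by
  have hmono : StrictMono (fun k : Fin (s + 1) => toLex (ctup (B k))) := by
    apply Fin.strictMono_iff_lt_succ.mpr
    intro k
    obtain ⟨u, v, huv, hrel⟩ := hswap k
    exact step _ _ u v huv hrel (hchain k)
  have h0 : (0 : Fin (s + 1)) < Fin.last s := by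
    rw [Fin.lt_def]
    simp [hs]
  rw [← hlast]; exact hmono h0
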